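/- For all real α with 0 ≤ α ≤ 2π/3, letting x̄ = 3α/2 − π − sin(α/2) + 2·sin(α), one has max(α, x̄ + 2·sin(α/2)) + 2 ≤ π − α/2 + 3·sin(α/2). -/

import Mathlib

open Real

private lemma aux_poly (x : ℝ) (hx0 : 0 ≤ x) (hx1 : x ≤ 0.5235989) :
    6 * x + 1 - 8 * x * (x - x ^ 3 / 6 - x ^ 4 * (5 / 96)) ^ 2 ≤ 3.141592 := by
  nlinarith [mul_nonneg hx0 hx0, mul_nonneg (mul_nonneg hx0 hx0) hx0,
    mul_nonneg (sub_nonneg.mpr hx1) hx0,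
    mul_nonneg (sub_nonneg.mpr hx1) (mul_nonneg hx0 hx0),
    mul_nonneg (sub_nonneg.mpr hx1) (mul_nonneg (mul_nonneg hx0 hx0) hx0),
    mul_nonneg (mul_nonneg (sub_nonneg.mpr hx1) (sub_nonneg.mpr hx1)) (mul_nonneg hx0 hx0),
    pow_nonneg hx0 4, pow_nonneg hx0 5, pow_nonneg hx0 6, pow_nonneg hx0 7,
    pow_nonneg hx0 8, pow_nonneg hx0 9,
    mul_nonneg (sub_nonneg.mpr hx1) (pow_nonneg hx0 4),
    mul_nonneg (sub_nonneg.mpr hx1) (pow_nonneg hx0 5),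
    mul_nonneg (sub_nonneg.mpr hx1) (pow_nonneg hx0 6),
    mul_nonneg (sub_nonneg.mpr hx1) (pow_nonneg hx0 7),
    mul_nonneg (sub_nonneg.mpr hx1) (pow_nonneg hx0 8)]

private lemma aux1 (x : ℝ) (hx0 : 0 ≤ x) (hx1 : x ≤ π / 3) : 3 * x + 2 ≤ π + 3 * sin x := by
  rcases le_or_gt x 1 with h | h
  · have hb := Real.sin_bound (x := x) (by rw [abs_of_nonneg hx0]; exact h)
    rw [abs_of_nonneg hx0] at hb
    have hb' : x - x ^ 3 / 6 - x ^ 4 * (5 / 96) ≤ sin x := by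
      have := abs_le.mp hb; nlinarith [this.1, mul_nonneg (pow_nonneg hx0 4) (sub_nonneg.mpr h)]
    nlinarith [Real.pi_gt_d6, (pow_le_one₀ hx0 h : x ^ 3 ≤ 1),
      (pow_le_one₀ hx0 h : x ^ 4 ≤ 1), pow_nonneg hx0 3, pow_nonneg hx0 4]
  · have h2 : sin 1 < sin x := by
      apply Real.sin_lt_sin_of_lt_of_le_pi_div_two (by nlinarith [Real.pi_gt_d6]) _ h
      nlinarith [Real.pi_gt_d6]
    have h3 : (3:ℝ)/4 < sin 1 := by
      have := Real.sin_gt_sub_cube one_pos; norm_num at this; linarith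
    nlinarith [Real.pi_gt_d6]

private lemma aux2 (x : ℝ) (hx0 : 0 ≤ x) (hx1 : x ≤ π / 6) :
    4 * x + 1 + 2 * sin x * cos x * (1 - 4 * sin x ^ 2) ≤ π := by
  set s := sin x with hs
  set c := cos x with hc
  have hx1' : x ≤ 0.5235989 := by nlinarith [Real.pi_lt_d6]
  have hxle1 : x ≤ 1 := by linarith
  have hs0 : 0 ≤ s := Real.sin_nonneg_of_nonneg_of_le_pi hx0 (by nlinarith [Real.pi_gt_d6])
  have hsx : s ≤ x := Real.sin_le hx0
  have hc0 : 0 ≤ c := Real.cos_nonneg_of_mem_Icc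
    ⟨by linarith [Real.pi_gt_d6], by nlinarith [Real.pi_gt_d6]⟩
  have hc1 : c ≤ 1 := Real.cos_le_one x
  have pyth : s ^ 2 + c ^ 2 = 1 := Real.sin_sq_add_cos_sq x
  have hb := Real.sin_bound (x := x) (by rw [abs_of_nonneg hx0]; exact hxle1)
  rw [abs_of_nonneg hx0] at hb
  have hL : x - x ^ 3 / 6 - x ^ 4 * (5 / 96) ≤ s := by
    have := abs_le.mp hb; nlinarith [this.1, mul_nonneg (pow_nonneg hx0 4) (sub_nonneg.mpr hxle1)]
  rcases le_or_gt s (1/2) with hhalf | hhalf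
  · have h4s : 0 ≤ 1 - 4 * s ^ 2 := by nlinarith
    have hscx : s * c ≤ x := by nlinarith
    have h1 : 2 * s * c * (1 - 4 * s ^ 2) ≤ 2 * x * (1 - 4 * s ^ 2) := by
      nlinarith [mul_le_mul_of_nonneg_right hscx h4s]
    have hbr : 0 ≤ 1 - x ^ 2 / 6 - x ^ 3 * (5 / 96) := by
      nlinarith [(pow_le_one₀ hx0 hxle1 : x ^ 2 ≤ 1), (pow_le_one₀ hx0 hxle1 : x ^ 3 ≤ 1)]
    have hLpos : 0 ≤ x - x ^ 3 / 6 - x ^ 4 * (5 / 96) := by nlinarith [mul_nonneg hx0 hbr]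
    have h2 : (x - x ^ 3 / 6 - x ^ 4 * (5 / 96)) ^ 2 ≤ s ^ 2 := by nlinarith
    have h3 : 2 * x * (1 - 4 * s ^ 2) ≤
        2 * x * (1 - 4 * (x - x ^ 3 / 6 - x ^ 4 * (5 / 96)) ^ 2) := by
      nlinarith [mul_nonneg hx0 (sub_nonneg.mpr h2)]
    have hpoly := aux_poly x hx0 hx1'
    have hπ := Real.pi_gt_d6
    linarith
  · have h4 : 0 ≤ 4 * s ^ 2 - 1 := by nlinarith
    have h1 : 2 * s * c * (1 - 4 * s ^ 2) ≤ 0 := by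
      nlinarith [mul_nonneg (mul_nonneg hs0 hc0) h4]
    linarith [Real.pi_gt_d6]

theorem stmt5 (α : ℝ) (h0 : 0 ≤ α) (h1 : α ≤ 2 * π / 3) :
    max α ((3 * α / 2 - π - sin (α / 2) + 2 * sin α) + 2 * sin (α / 2)) + 2 ≤
      π - α / 2 + 3 * sin (α / 2) := by
  have key1 : α + 2 ≤ π - α / 2 + 3 * sin (α / 2) := by
    have := aux1 (α / 2) (by linarith) (by linarith)
    linarith
  have key2 : (3 * α / 2 - π - sin (α / 2) + 2 * sin α) + 2 * sin (α / 2) + 2 ≤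
      π - α / 2 + 3 * sin (α / 2) := by
    have e1 : sin (α / 2) = 2 * sin (α / 4) * cos (α / 4) := by
      rw [show α / 2 = 2 * (α / 4) by ring, Real.sin_two_mul]
    have e2 : sin α = 2 * sin (α / 2) * cos (α / 2) := by
      rw [show α = 2 * (α / 2) by ring, Real.sin_two_mul]
      ring_nf
    have e3 : cos (α / 2) = 1 - 2 * sin (α / 4) ^ 2 := by
      rw [show α / 2 = 2 * (α / 4) by ring, Real.cos_two_mul]
      have := Real.sin_sq_add_cos_sq (α / 4)
      nlinarith
    have h4 := aux2 (α / 4) (by linarith) (by linarith)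
    rw [e2, e3, e1]
    nlinarith [h4]
  rcases max_choice α ((3 * α / 2 - π - sin (α / 2) + 2 * sin α) + 2 * sin (α / 2)) with h | h <;>
    rw [h] <;> linarith
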